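/- arXiv:2110.11657 — 3 statements merged into one kernel-verified Lean document; each statement's English description precedes it below -/
import Mathlib

section
/- (Value of τ reaching the ground truth, and τ_converge = 1/4 on SO(3)) Let θ ∈ (0, π), let ω ∈ ℝ³ be a unit vector, and let R_gt = exp(θ ω^∧). The Riemannian gradient of the L2 loss ‖R − R_gt‖_F² at R = I is G := 2(R_gtᵀ − R_gt). If τ = θ / (4 sin θ), then the Riemannian gradient step exp(−τ · G) = R_gt, i.e. a single Riemannian step with step size θ/(4 sin θ) from the identity reaches R_gt exactly. Moreover θ/(4 sin θ) → 1/4 as θ → 0⁺. -/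
open Matrix

/-- The hat map sending `ω ∈ ℝ³` to the skew-symmetric matrix `ω^∧`. -/
def hat (ω : Fin 3 → ℝ) : Matrix (Fin 3) (Fin 3) ℝ :=
  !![0, -ω 2, ω 1; ω 2, 0, -ω 0; -ω 1, ω 0, 0]

lemma hat_cube (ω : Fin 3 → ℝ) (hω : ω 0 ^ 2 + ω 1 ^ 2 + ω 2 ^ 2 = 1) :
    hat ω ^ 3 = -hat ω := by
  ext i j
  fin_cases i <;> fin_cases j <;>
    simp [hat, pow_succ, Matrix.mul_apply, Fin.sum_univ_succ]
  · linear_combination (0 : ℝ) * hω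
  · linear_combination ω 2 * hω
  · linear_combination (-ω 1) * hω
  · linear_combination (-ω 2) * hω
  · linear_combination (0 : ℝ) * hω
  · linear_combination ω 0 * hω
  · linear_combination ω 1 * hω
  · linear_combination (-ω 0) * hω
  · linear_combination (0 : ℝ) * hω

lemma hat_transpose (ω : Fin 3 → ℝ) : (hat ω)ᵀ = -hat ω := by
  ext i j
  fin_cases i <;> fin_cases j <;> simp [hat]

set_option maxHeartbeats 1000000 in
lemma rodrigues (K : Matrix (Fin 3) (Fin 3) ℝ) (hK : K ^ 3 = -K) (θ : ℝ) :
    NormedSpace.exp (θ • K) =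
      1 + Real.sin θ • K + (1 - Real.cos θ) • K ^ 2 := by
  have hodd : ∀ k : ℕ, K ^ (2 * k + 1) = ((-1 : ℝ) ^ k) • K := by
    intro k
    induction k with
    | zero => simp
    | succ n ih =>
      have h1 : 2 * (n + 1) + 1 = (2 * n + 1) + 2 := by ring
      have h2 : K ^ ((2 * n + 1) + 2) = K ^ (2 * n + 1) * K ^ 2 := by
        rw [pow_add]
      rw [h1, h2, ih, Algebra.smul_mul_assoc, ← pow_succ']
      rw [show (2 : ℕ) + 1 = 3 from rfl, hK]
      rw [smul_neg, pow_succ]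
      simp [smul_smul, mul_comm]
  have heven : ∀ k : ℕ, K ^ (2 * (k + 1)) = ((-1 : ℝ) ^ k) • K ^ 2 := by
    intro k
    have h1 : 2 * (k + 1) = (2 * k + 1) + 1 := by ring
    rw [h1, pow_succ, hodd k, Algebra.smul_mul_assoc, ← pow_two]
  rw [NormedSpace.exp_eq_tsum ℝ]
  refine HasSum.tsum_eq ?_
  have hcos := Real.hasSum_cos θ
  have hsin := Real.hasSum_sin θ
  have hOdd : HasSum (fun k : ℕ => ((Nat.factorial (2 * k + 1) : ℝ)⁻¹) • (θ • K) ^ (2 * k + 1))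
      (Real.sin θ • K) := by
    refine (hsin.smul_const K).congr_fun fun k => ?_
    rw [smul_pow, hodd k, smul_smul, smul_smul]
    congr 1
    ring
  have hc1 : HasSum
      (fun n : ℕ => (-1 : ℝ) ^ (n + 1) * θ ^ (2 * (n + 1)) / (Nat.factorial (2 * (n + 1)) : ℝ))
      (Real.cos θ - 1) := by
    exact (hasSum_nat_add_iff
      (f := fun n : ℕ => (-1 : ℝ) ^ n * θ ^ (2 * n) / (Nat.factorial (2 * n) : ℝ)) 1).mpr
      (by simpa using hcos)
  have hc2 : HasSum
      (fun n : ℕ => ((Nat.factorial (2 * (n + 1)) : ℝ)⁻¹) • (θ • K) ^ (2 * (n + 1)))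
      ((1 - Real.cos θ) • K ^ 2) := by
    have h := hc1.neg.smul_const (K ^ 2)
    rw [neg_sub] at h
    refine h.congr_fun fun k => ?_
    rw [smul_pow, heven k, smul_smul, smul_smul]
    congr 1
    ring
  have hEven : HasSum (fun k : ℕ => ((Nat.factorial (2 * k) : ℝ)⁻¹) • (θ • K) ^ (2 * k))
      (1 + (1 - Real.cos θ) • K ^ 2) := by
    have h := (hasSum_nat_add_iff
      (f := fun k : ℕ => ((Nat.factorial (2 * k) : ℝ)⁻¹) • (θ • K) ^ (2 * k)) 1).mp hc2
    simpa [add_comm] using h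
  have h := HasSum.even_add_odd (f := fun n : ℕ => ((Nat.factorial n : ℝ))⁻¹ • (θ • K) ^ n)
    hEven hOdd
  have e : 1 + (1 - Real.cos θ) • K ^ 2 + Real.sin θ • K
      = 1 + Real.sin θ • K + (1 - Real.cos θ) • K ^ 2 := by abel
  exact e ▸ h

/-- For `θ ∈ (0, π)`, a unit axis `ω` and `R_gt = exp (θ ω^∧)`, a single Riemannian
gradient step from the identity on the L2 loss with step size `τ = θ / (4 sin θ)`,
i.e. `exp (-τ · 2(R_gtᵀ - R_gt))`, reaches `R_gt` exactly; moreover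
`θ / (4 sin θ) → 1/4` as `θ → 0⁺`. -/
theorem riemannian_step_reaches_gt_and_tau_converge
    (θ : ℝ) (hθ : θ ∈ Set.Ioo 0 Real.pi)
    (ω : Fin 3 → ℝ) (hω : ω 0 ^ 2 + ω 1 ^ 2 + ω 2 ^ 2 = 1)
    (Rgt : Matrix (Fin 3) (Fin 3) ℝ) (hRgt : Rgt = NormedSpace.exp (θ • hat ω)) :
    NormedSpace.exp (-(θ / (4 * Real.sin θ)) • ((2 : ℝ) • (Rgtᵀ - Rgt))) = Rgt ∧
      Filter.Tendsto (fun t : ℝ => t / (4 * Real.sin t))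
        (nhdsWithin 0 (Set.Ioi 0)) (nhds (1 / 4)) := by
  obtain ⟨hθ0, hθπ⟩ := hθ
  have hs : 0 < Real.sin θ := Real.sin_pos_of_pos_of_lt_pi hθ0 hθπ
  constructor
  · have h3 : hat ω ^ 3 = -hat ω := hat_cube ω hω
    have hRgtT : Rgtᵀ = NormedSpace.exp ((-θ) • hat ω) := by
      rw [hRgt, ← Matrix.exp_transpose, Matrix.transpose_smul, hat_transpose]
      rw [smul_neg, neg_smul]
    have e1 : Rgt = 1 + Real.sin θ • hat ω + (1 - Real.cos θ) • hat ω ^ 2 := by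
      rw [hRgt]; exact rodrigues (hat ω) h3 θ
    have e2 : Rgtᵀ = 1 + Real.sin (-θ) • hat ω + (1 - Real.cos (-θ)) • hat ω ^ 2 := by
      rw [hRgtT]; exact rodrigues (hat ω) h3 (-θ)
    have hdiff : Rgtᵀ - Rgt = (-(2 * Real.sin θ)) • hat ω := by
      rw [e2, e1, Real.sin_neg, Real.cos_neg]
      module
    have harg : -(θ / (4 * Real.sin θ)) • ((2 : ℝ) • (Rgtᵀ - Rgt)) = θ • hat ω := by
      rw [hdiff, smul_smul, smul_smul]
      congr 1
      field_simp
      ring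
    rw [harg, hRgt]
  · have hder : HasDerivAt Real.sin 1 0 := by
      simpa using Real.hasDerivAt_sin 0
    have hslope : Filter.Tendsto (fun t : ℝ => Real.sin t / t)
        (nhdsWithin 0 {(0 : ℝ)}ᶜ) (nhds 1) := by
      have h := hasDerivAt_iff_tendsto_slope.mp hder
      refine h.congr' ?_
      filter_upwards [self_mem_nhdsWithin] with t ht
      have ht0 : t ≠ 0 := ht
      simp [slope_def_field]
    have hmono : nhdsWithin (0 : ℝ) (Set.Ioi 0) ≤ nhdsWithin 0 {(0 : ℝ)}ᶜ := by
      apply nhdsWithin_mono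
      intro x hx
      exact ne_of_gt hx
    have h1 : Filter.Tendsto (fun t : ℝ => Real.sin t / t)
        (nhdsWithin 0 (Set.Ioi 0)) (nhds 1) := hslope.mono_left hmono
    have h2 : Filter.Tendsto (fun t : ℝ => (Real.sin t / t)⁻¹)
        (nhdsWithin 0 (Set.Ioi 0)) (nhds 1) := by
      simpa using h1.inv₀ one_ne_zero
    have h3 : Filter.Tendsto (fun t : ℝ => (1 / 4) * (Real.sin t / t)⁻¹)
        (nhdsWithin 0 (Set.Ioi 0)) (nhds ((1 / 4) * 1)) := h2.const_mul _
    rw [mul_one] at h3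
    refine h3.congr' ?_
    filter_upwards [self_mem_nhdsWithin] with t ht
    have ht0 : t ≠ 0 := ne_of_gt ht
    rw [inv_div]
    ring
end

section
/- (Inverse image of SVD orthogonalization is contained in the symmetric multiples of the target rotation) Let U, V be 3×3 real orthogonal matrices (UᵀU = I, VᵀV = I), let Σ be a 3×3 diagonal matrix, and set x = U Σ Vᵀ. Let Σ′ = diag(1, 1, det(UVᵀ)) and R = U Σ′ Vᵀ (the SVD-orthogonalization of x). Then the matrix S = U Σ (Σ′)⁻¹ Uᵀ is symmetric and x = S R. Consequently, every matrix whose SVD orthogonalization equals a given rotation R lies in the set { S R : S a symmetric 3×3 matrix }. -/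
open Matrix

/-- **Inverse image of SVD orthogonalization.** Given an SVD `x = U Σ Vᵀ` with
`U, V` orthogonal and `Σ` diagonal, let `Σ' = diag(1, 1, det (U Vᵀ))` and let
`R = U Σ' Vᵀ` be the SVD-orthogonalization of `x`. Then
`S = U Σ (Σ')⁻¹ Uᵀ` is symmetric and `x = S R`; consequently `x` lies in the
set of symmetric multiples `{ S' R : S' symmetric }` of the rotation `R`. -/
theorem svd_inverse_image_symmetric_multiples
    (U V : Matrix (Fin 3) (Fin 3) ℝ)
    (hU : Uᵀ * U = 1) (hV : Vᵀ * V = 1)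
    (d : Fin 3 → ℝ) :
    (U * Matrix.diagonal d * (Matrix.diagonal ![1, 1, (U * Vᵀ).det])⁻¹ * Uᵀ)ᵀ =
        U * Matrix.diagonal d * (Matrix.diagonal ![1, 1, (U * Vᵀ).det])⁻¹ * Uᵀ ∧
      U * Matrix.diagonal d * Vᵀ =
        (U * Matrix.diagonal d * (Matrix.diagonal ![1, 1, (U * Vᵀ).det])⁻¹ * Uᵀ) *
          (U * Matrix.diagonal ![1, 1, (U * Vᵀ).det] * Vᵀ) ∧
      U * Matrix.diagonal d * Vᵀ ∈
        {y : Matrix (Fin 3) (Fin 3) ℝ |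
          ∃ S : Matrix (Fin 3) (Fin 3) ℝ,
            Sᵀ = S ∧ y = S * (U * Matrix.diagonal ![1, 1, (U * Vᵀ).det] * Vᵀ)} := by
  set e : ℝ := (U * Vᵀ).det with he
  have hUdet : U.det * U.det = 1 := by
    have := congrArg Matrix.det hU
    simpa [Matrix.det_mul, Matrix.det_transpose, mul_comm] using this
  have hVdet : V.det * V.det = 1 := by
    have := congrArg Matrix.det hV
    simpa [Matrix.det_mul, Matrix.det_transpose, mul_comm] using this
  have he2 : e * e = 1 := by
    have : e = U.det * V.det := by
      rw [he, Matrix.det_mul, Matrix.det_transpose]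
    rw [this]
    calc U.det * V.det * (U.det * V.det) = (U.det * U.det) * (V.det * V.det) := by ring
      _ = 1 := by rw [hUdet, hVdet, one_mul]
  have hsq : Matrix.diagonal ![1, 1, e] * Matrix.diagonal ![1, 1, e] = 1 := by
    rw [Matrix.diagonal_mul_diagonal]
    have hf : (fun i => ![1, 1, e] i * ![1, 1, e] i) = fun _ => (1 : ℝ) := by
      funext i; fin_cases i <;> simp [he2]
    rw [hf, Matrix.diagonal_one]
  have hinv : (Matrix.diagonal ![1, 1, e])⁻¹ = Matrix.diagonal ![1, 1, e] :=
    Matrix.inv_eq_left_inv hsq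
  have hcomm : Matrix.diagonal ![1, 1, e] * Matrix.diagonal d
      = Matrix.diagonal d * Matrix.diagonal ![1, 1, e] := by
    have hfc : (fun i => ![1, 1, e] i * d i) = fun i => d i * ![1, 1, e] i := by
      funext i; ring
    rw [Matrix.diagonal_mul_diagonal, Matrix.diagonal_mul_diagonal, hfc]
  have hsym : (U * Matrix.diagonal d * (Matrix.diagonal ![1, 1, e])⁻¹ * Uᵀ)ᵀ =
      U * Matrix.diagonal d * (Matrix.diagonal ![1, 1, e])⁻¹ * Uᵀ := by
    rw [hinv]
    simp only [Matrix.transpose_mul, Matrix.transpose_transpose, Matrix.diagonal_transpose]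
    simp only [mul_assoc]
    rw [← mul_assoc (Matrix.diagonal ![1, 1, e]) (Matrix.diagonal d) Uᵀ, hcomm, mul_assoc]
  have hprod : U * Matrix.diagonal d * Vᵀ =
      (U * Matrix.diagonal d * (Matrix.diagonal ![1, 1, e])⁻¹ * Uᵀ) *
        (U * Matrix.diagonal ![1, 1, e] * Vᵀ) := by
    rw [hinv]
    have : U * Matrix.diagonal d * Matrix.diagonal ![1, 1, e] * Uᵀ *
        (U * Matrix.diagonal ![1, 1, e] * Vᵀ) = U * Matrix.diagonal d * Vᵀ := by
      calc U * Matrix.diagonal d * Matrix.diagonal ![1, 1, e] * Uᵀ *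
            (U * Matrix.diagonal ![1, 1, e] * Vᵀ)
          = U * Matrix.diagonal d * (Matrix.diagonal ![1, 1, e] * ((Uᵀ * U) *
              (Matrix.diagonal ![1, 1, e] * Vᵀ))) := by
            simp only [mul_assoc]
        _ = U * Matrix.diagonal d * Vᵀ := by
            rw [hU, one_mul, ← mul_assoc (Matrix.diagonal ![1, 1, e]), hsq, one_mul]
    exact this.symm
  exact ⟨hsym, hprod, ⟨_, hsym, hprod⟩⟩
end

section
/- (Value of τ reaching the ground truth, and τ_converge = 1/2 on S²) Let x, y ∈ ℝ³ be unit vectors with x · y = cos θ for some θ ∈ (0, π). Then ‖y − (x · y) x‖ = sin θ. Moreover, let g = 2((x · y) x − y) be the Riemannian gradient of ‖x − y‖² at x, and set τ = θ/(2 sin θ) and v = −τ g. Then v · x = 0, v ≠ 0, and the Riemannian gradient step exp_x(v) = cos(‖v‖) x + sin(‖v‖) v/‖v‖ equals y exactly. Finally θ/(2 sin θ) → 1/2 as θ → 0⁺. -/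
open RealInnerProductSpace

/-- **Value of τ reaching the ground truth, and τ_converge = 1/2 on S².**
For unit vectors `x, y` with `x ⬝ y = cos θ`, `θ ∈ (0, π)`:
`‖y - (x⬝y) x‖ = sin θ`; with `g = 2((x⬝y) x - y)` the Riemannian gradient of
`‖x - y‖²` at `x` and `v = -(θ/(2 sin θ)) g`, the vector `v` is a nonzero
tangent vector at `x` and the Riemannian step `exp_x(v)` reaches `y` exactly;
finally `θ/(2 sin θ) → 1/2` as `θ → 0⁺`. -/
theorem sphere_step_reaches_gt_and_tau_converge
    (x y : EuclideanSpace ℝ (Fin 3)) (hx : ‖x‖ = 1) (hy : ‖y‖ = 1)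
    (θ : ℝ) (hθ : θ ∈ Set.Ioo 0 Real.pi) (hxy : ⟪x, y⟫ = Real.cos θ) :
    ‖y - ⟪x, y⟫ • x‖ = Real.sin θ ∧
      (∀ v : EuclideanSpace ℝ (Fin 3),
        v = -(θ / (2 * Real.sin θ)) • ((2 : ℝ) • (⟪x, y⟫ • x - y)) →
          ⟪v, x⟫ = 0 ∧ v ≠ 0 ∧
            Real.cos ‖v‖ • x + Real.sin ‖v‖ • (‖v‖⁻¹ • v) = y) ∧
      Filter.Tendsto (fun t : ℝ => t / (2 * Real.sin t))
        (nhdsWithin 0 (Set.Ioi 0)) (nhds (1 / 2)) := by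
  obtain ⟨hθ0, hθπ⟩ := hθ
  have hs : 0 < Real.sin θ := Real.sin_pos_of_pos_of_lt_pi hθ0 hθπ
  have hnorm : ‖y - ⟪x, y⟫ • x‖ = Real.sin θ := by
    have hsq : ‖y - ⟪x, y⟫ • x‖ ^ 2 = Real.sin θ ^ 2 := by
      rw [norm_sub_sq_real, norm_smul, real_inner_smul_right, real_inner_comm x y]
      simp only [hx, hxy, Real.norm_eq_abs, mul_one]
      rw [sq_abs]
      nlinarith [Real.sin_sq_add_cos_sq θ]
    nlinarith [norm_nonneg (y - ⟪x, y⟫ • x), hsq, hs]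
  refine ⟨hnorm, ?_, ?_⟩
  · intro v hv
    have hv' : v = (θ / Real.sin θ) • (y - ⟪x, y⟫ • x) := by
      rw [hv, smul_smul,
        show -(θ / (2 * Real.sin θ)) * 2 = -(θ / Real.sin θ) by field_simp,
        neg_smul, ← smul_neg, neg_sub]
    have hvnorm : ‖v‖ = θ := by
      rw [hv', norm_smul, hnorm, Real.norm_eq_abs, abs_of_pos (by positivity)]
      field_simp
    refine ⟨?_, ?_, ?_⟩
    · rw [hv', real_inner_smul_left, inner_sub_left, real_inner_smul_left,
        real_inner_self_eq_norm_sq, hx, real_inner_comm y x]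
      ring
    · intro h
      rw [h, norm_zero] at hvnorm
      linarith
    · rw [hvnorm, hv', smul_smul, smul_smul]
      have : Real.sin θ * θ⁻¹ * (θ / Real.sin θ) = 1 := by
        field_simp
      rw [this, one_smul, hxy]
      abel
  · have h1 : Filter.Tendsto (fun t : ℝ => Real.sin t / t)
        (nhdsWithin 0 (Set.Ioi 0)) (nhds 1) := by
      have := (Real.hasDerivAt_sin 0).tendsto_slope_zero_right
      simpa [Real.sin_zero, Real.cos_zero, slope_def_field, div_eq_mul_inv,
        mul_comm] using this
    have h2 : Filter.Tendsto (fun t : ℝ => (Real.sin t / t)⁻¹ * (1 / 2))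
        (nhdsWithin 0 (Set.Ioi 0)) (nhds ((1 : ℝ)⁻¹ * (1 / 2))) :=
      (h1.inv₀ one_ne_zero).mul tendsto_const_nhds
    have h3 : (fun t : ℝ => (Real.sin t / t)⁻¹ * (1 / 2)) =ᶠ[nhdsWithin 0 (Set.Ioi 0)]
        (fun t : ℝ => t / (2 * Real.sin t)) := by
      filter_upwards [self_mem_nhdsWithin] with t ht
      have ht' : (0 : ℝ) < t := ht
      rw [inv_div]
      field_simp
    have := h2.congr' h3
    simpa using this
end
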